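/- For every even positive integer d, the quantity 1/2 + 2^{−(d+1)}·C(d, d/2) lies between 1/2 + (1/√(2πd))·(1 − 1/(3d)) and 1/2 + 1/√(2πd). -/

import Mathlib

open Real Filter Nat Stirling Topology

private lemma my_diff_le (n : ℕ) :
    Real.log (stirlingSeq (n + 1)) - Real.log (stirlingSeq (n + 2)) ≤
      1 / (12 * ((n : ℝ) + 1)) - 1 / (12 * ((n : ℝ) + 2)) := by
  have h_nonneg : (0 : ℝ) ≤ ((1 : ℝ) / (2 * ↑(n + 1) + 1)) ^ 2 := sq_nonneg _
  have hlt : ((1 : ℝ) / (2 * ↑(n + 1) + 1)) ^ 2 < 1 := by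
    rw [one_div, inv_pow]
    exact inv_lt_one_of_one_lt₀ (one_lt_pow₀ (lt_add_of_pos_left _ <| by positivity) two_ne_zero)
  have g : HasSum (fun k : ℕ => (1/3 : ℝ) * (((1 : ℝ) / (2 * ↑(n + 1) + 1)) ^ 2) ^ (k + 1))
      ((1/3) * (((1 : ℝ) / (2 * ↑(n + 1) + 1)) ^ 2 / (1 - ((1 : ℝ) / (2 * ↑(n + 1) + 1)) ^ 2))) := by
    have := ((hasSum_geometric_of_lt_one h_nonneg hlt).mul_left
      (((1 : ℝ) / (2 * ↑(n + 1) + 1)) ^ 2)).mul_left (1/3)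
    rw [div_eq_mul_inv]
    simp_rw [← _root_.pow_succ'] at this
    exact this
  have hab : ∀ k : ℕ, (1 : ℝ) / (2 * ↑(k + 1) + 1) * ((1 / (2 * ↑(n + 1) + 1)) ^ 2) ^ (k + 1) ≤
      (1/3 : ℝ) * (((1 : ℝ) / (2 * ↑(n + 1) + 1)) ^ 2) ^ (k + 1) := by
    intro k
    apply mul_le_mul_of_nonneg_right _ (pow_nonneg h_nonneg _)
    rw [div_le_div_iff₀ (by positivity) (by norm_num)]
    push_cast
    linarith [Nat.cast_nonneg (α := ℝ) k]
  refine (hasSum_le hab (log_stirlingSeq_diff_hasSum n) g).trans_eq ?_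
  have h1 : (2 * ((n : ℝ) + 1) + 1) ≠ 0 := by positivity
  have h2 : 1 - ((1 : ℝ) / (2 * ((n : ℝ) + 1) + 1)) ^ 2 ≠ 0 := by
    push_cast at hlt; nlinarith [hlt]
  push_cast
  push_cast at h2
  field_simp
  ring_nf
  field_simp
  ring

private lemma my_lower (n : ℕ) (hn : 1 ≤ n) : Real.sqrt π ≤ stirlingSeq n := by
  obtain ⟨k, rfl⟩ := Nat.exists_eq_add_of_le hn
  have ht : Tendsto (stirlingSeq ∘ Nat.succ) atTop (𝓝 (Real.sqrt π)) :=
    tendsto_stirlingSeq_sqrt_pi.comp (tendsto_add_atTop_nat 1)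
  simpa [Nat.add_comm] using stirlingSeq'_antitone.le_of_tendsto ht k

private lemma my_upper (n : ℕ) (hn : 1 ≤ n) :
    stirlingSeq n ≤ Real.sqrt π * Real.exp (1 / (12 * (n : ℝ))) := by
  obtain ⟨k, rfl⟩ := Nat.exists_eq_add_of_le hn
  have hπ : (0:ℝ) < Real.sqrt π := Real.sqrt_pos.mpr Real.pi_pos
  have hg : Monotone (fun m : ℕ => Real.log (stirlingSeq (m + 1)) - 1 / (12 * ((m : ℝ) + 1))) := by
    apply monotone_nat_of_le_succ
    intro m
    have := my_diff_le m
    push_cast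
    push_cast at this
    ring_nf
    ring_nf at this
    linarith
  have hlog : Tendsto (fun m : ℕ => Real.log (stirlingSeq (m + 1))) atTop (𝓝 (Real.log (Real.sqrt π))) := by
    exact ((Real.continuousAt_log hπ.ne').tendsto.comp
      (tendsto_stirlingSeq_sqrt_pi.comp (tendsto_add_atTop_nat 1)))
  have hzero : Tendsto (fun m : ℕ => 1 / (12 * ((m : ℝ) + 1))) atTop (𝓝 0) := by
    have hm : Tendsto (fun m : ℕ => 12 * ((m : ℝ) + 1)) atTop atTop := by
      apply Tendsto.const_mul_atTop (by norm_num : (0:ℝ) < 12)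
      exact tendsto_atTop_add_const_right _ 1 tendsto_natCast_atTop_atTop
    have h := hm.inv_tendsto_atTop
    simp only [one_div]
    exact h
  have ht : Tendsto (fun m : ℕ => Real.log (stirlingSeq (m + 1)) - 1 / (12 * ((m : ℝ) + 1)))
      atTop (𝓝 (Real.log (Real.sqrt π))) := by
    simpa using hlog.sub hzero
  have hk := hg.ge_of_tendsto ht k
  have hpos : 0 < stirlingSeq (k + 1) := stirlingSeq'_pos k
  have : Real.log (stirlingSeq (k + 1)) ≤ Real.log (Real.sqrt π) + 1 / (12 * ((k:ℝ) + 1)) := by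
    linarith [hk]
  have h2 : stirlingSeq (k+1) ≤ Real.sqrt π * Real.exp (1 / (12 * ((k:ℝ) + 1))) := by
    rw [← Real.log_le_log_iff hpos (by positivity), Real.log_mul hπ.ne' (Real.exp_ne_zero _),
      Real.log_exp]
    exact this
  have : ((1 + k : ℕ) : ℝ) = (k : ℝ) + 1 := by push_cast; ring
  rw [Nat.add_comm 1 k]
  rw [show ((k + 1 : ℕ) : ℝ) = (k:ℝ) + 1 by push_cast; ring]
  exact h2

set_option maxHeartbeats 1000000 in
theorem half_add_centralBinom_bounds (d : ℕ) (hd : 0 < d) (hev : Even d) :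
    1 / 2 + 1 / Real.sqrt (2 * Real.pi * d) * (1 - 1 / (3 * d))
      ≤ 1 / 2 + (Nat.choose d (d / 2) : ℝ) / 2 ^ (d + 1) ∧
    1 / 2 + (Nat.choose d (d / 2) : ℝ) / 2 ^ (d + 1)
      ≤ 1 / 2 + 1 / Real.sqrt (2 * Real.pi * d) := by
  obtain ⟨n, rfl⟩ := hev
  have hn : 1 ≤ n := by omega
  have hdiv : (n + n) / 2 = n := by omega
  rw [hdiv]
  set N : ℝ := (n : ℝ) with hN
  have hN1 : 1 ≤ N := by rw [hN]; exact_mod_cast hn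
  have hN0 : 0 < N := by linarith
  have hπ : (0:ℝ) < π := Real.pi_pos
  have hP : (0:ℝ) < Real.sqrt π := Real.sqrt_pos.mpr hπ
  have hS : (0:ℝ) < Real.sqrt N := Real.sqrt_pos.mpr hN0
  set sn := stirlingSeq n with hsn
  set s2n := stirlingSeq (n + n) with hs2n
  have hsnpos : 0 < sn := by
    rw [hsn]; obtain ⟨k, rfl⟩ := Nat.exists_eq_add_of_le hn
    rw [Nat.add_comm]; exact stirlingSeq'_pos k
  have hs2npos : 0 < s2n := by
    rw [hs2n]; obtain ⟨k, rfl⟩ := Nat.exists_eq_add_of_le hn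
    have : 1 + k + (1 + k) = (k + (1 + k)) + 1 := by ring
    rw [this]; exact stirlingSeq'_pos _
  -- factorials in terms of stirlingSeq
  have hfact : ∀ m : ℕ, 1 ≤ m → ((m ! : ℝ)) = stirlingSeq m * (Real.sqrt (2 * m) * ((m : ℝ) / Real.exp 1) ^ m) := by
    intro m hm
    have hm0 : (0:ℝ) < m := by exact_mod_cast hm
    rw [stirlingSeq]
    field_simp
  have hfn := hfact n hn
  have hf2n := hfact (n + n) (by omega)
  -- choose identity
  have hch : ((n + n).choose n : ℝ) * (n ! : ℝ) * (n ! : ℝ) = ((n + n)! : ℝ) := by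
    have h := Nat.choose_mul_factorial_mul_factorial (Nat.le_add_right n n)
    rw [show n + n - n = n from by omega] at h
    exact_mod_cast h
  -- sqrt manipulations
  have hsq2n : Real.sqrt (2 * ((n:ℝ) + (n:ℝ))) = 2 * Real.sqrt N := by
    rw [show 2 * ((n:ℝ) + (n:ℝ)) = 4 * N by rw [hN]; ring, show (4:ℝ) = 2^2 by norm_num,
      Real.sqrt_mul (by positivity), Real.sqrt_sq (by norm_num)]
  have hmulself : Real.sqrt (2 * N) * Real.sqrt (2 * N) = 2 * N :=
    Real.mul_self_sqrt (by positivity)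
  have hSS : Real.sqrt N * Real.sqrt N = N := Real.mul_self_sqrt hN0.le
  have h2pow : (2:ℝ) ^ (n + n) = 4 ^ n := by rw [pow_add, ← mul_pow]; norm_num
  have hpow : (((n:ℝ) + (n:ℝ)) / Real.exp 1) ^ (n + n) = 4 ^ n * (((n:ℝ) / Real.exp 1) ^ n) ^ 2 := by
    rw [show ((n:ℝ) + (n:ℝ)) / Real.exp 1 = 2 * ((n:ℝ) / Real.exp 1) by ring, mul_pow, h2pow,
      pow_add, sq]
  -- key equality: choose = s2n * 4^n / (sn^2 * sqrt N)
  have hkey : ((n + n).choose n : ℝ) = s2n * 4 ^ n / (sn ^ 2 * Real.sqrt N) := by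
    have hne : (n ! : ℝ) ≠ 0 := by positivity
    have hexpne : ((n:ℝ) / Real.exp 1) ^ n ≠ 0 := by
      apply pow_ne_zero; positivity
    rw [eq_div_iff (by positivity)]
    have h1 : ((n + n).choose n : ℝ) * (sn ^ 2 * Real.sqrt N) * ((2 * N) * (((n:ℝ)/Real.exp 1)^n)^2)
        = s2n * 4 ^ n * ((2 * N) * (((n:ℝ)/Real.exp 1)^n)^2) → 
        ((n + n).choose n : ℝ) * (sn ^ 2 * Real.sqrt N) = s2n * 4 ^ n := by
      intro h
      have hp : (0:ℝ) < (2 * N) * (((n:ℝ)/Real.exp 1)^n)^2 := by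
        have : ((n:ℝ)/Real.exp 1)^n > 0 := by positivity
        positivity
      exact mul_right_cancel₀ hp.ne' h
    apply h1
    have hfn' : (n ! : ℝ) = sn * (Real.sqrt (2 * N) * ((N : ℝ) / Real.exp 1) ^ n) := by
      rw [hfn, hN, hsn]
    have hf2n' : ((n+n) ! : ℝ) = s2n * (2 * Real.sqrt N * (4 ^ n * (((N:ℝ) / Real.exp 1) ^ n)^2)) := by
      rw [hf2n, hs2n]
      push_cast
      rw [hsq2n, hpow]
      try rw [hN]
      try push_cast
      try ring
    have hc := hch
    rw [hfn', hf2n'] at hc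
    linear_combination Real.sqrt N * hc -
      ((n + n).choose n : ℝ) * sn ^ 2 * (((N:ℝ)/Real.exp 1)^n)^2 * Real.sqrt N * hmulself +
      2 * s2n * 4 ^ n * (((N:ℝ)/Real.exp 1)^n)^2 * hSS
  -- the bound on sqrt(2 pi d)
  have hsqd : Real.sqrt (2 * π * ((n:ℝ) + (n:ℝ))) = 2 * (Real.sqrt π * Real.sqrt N) := by
    rw [show 2 * π * ((n:ℝ) + (n:ℝ)) = 2^2 * (π * N) by rw [hN]; ring,
      Real.sqrt_mul (by positivity), Real.sqrt_sq (by norm_num),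
      Real.sqrt_mul hπ.le]
  have hpow2 : (2:ℝ) ^ (n + n + 1) = 2 * 4 ^ n := by
    rw [pow_succ, h2pow]; ring
  have hB : ((n + n).choose n : ℝ) / 2 ^ (n + n + 1) = s2n / (2 * sn ^ 2 * Real.sqrt N) := by
    rw [hkey, hpow2]
    field_simp
  have hle1 : s2n ≤ sn := by
    rw [hsn, hs2n]
    obtain ⟨k, rfl⟩ := Nat.exists_eq_add_of_le hn
    have h1 : 1 + k + (1 + k) = Nat.succ (k + (1 + k)) := by omega
    have h2 : 1 + k = Nat.succ k := by omega
    rw [h1, h2]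
    exact stirlingSeq'_antitone (by omega)
  have hPsn : Real.sqrt π ≤ sn := my_lower n hn
  have hPs2n : Real.sqrt π ≤ s2n := my_lower (n+n) (by omega)
  have hupper : sn ≤ Real.sqrt π * Real.exp (1 / (12 * N)) := my_upper n hn
  constructor
  · -- lower bound
    rw [hB]
    push_cast
    apply add_le_add_right
    rw [hsqd]
    set t : ℝ := 1 / (3 * (N + N)) with hT
    have htt : t = 1 / (6 * N) := by rw [hT]; ring_nf
    have ht0 : 0 ≤ 1 - t := by
      rw [htt]
      have : 1 / (6 * N) ≤ 1 / 6 := by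
        apply div_le_div_of_nonneg_left (by norm_num) (by norm_num) (by linarith)
      linarith
    have hexp : (1 - t) * Real.exp t ≤ 1 := by
      have h := Real.add_one_le_exp (-t)
      calc (1 - t) * Real.exp t ≤ Real.exp (-t) * Real.exp t :=
            mul_le_mul_of_nonneg_right (by linarith) (Real.exp_pos t).le
        _ = 1 := by rw [← Real.exp_add]; simp
    have hexpsq : Real.exp (1 / (12 * N)) ^ 2 = Real.exp t := by
      rw [← Real.exp_nat_mul]
      congr 1
      rw [htt]; push_cast; ring
    have hkey2 : sn ^ 2 * (1 - t) ≤ s2n * Real.sqrt π := by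
      have h1 : sn ^ 2 ≤ π * Real.exp t := by
        calc sn ^ 2 ≤ (Real.sqrt π * Real.exp (1 / (12 * N))) ^ 2 := by
              apply pow_le_pow_left₀ hsnpos.le hupper
          _ = π * Real.exp t := by
              rw [mul_pow, Real.sq_sqrt hπ.le, hexpsq]
        
      have h2 : π ≤ s2n * Real.sqrt π := by
        calc π = Real.sqrt π * Real.sqrt π := (Real.mul_self_sqrt hπ.le).symm
          _ ≤ s2n * Real.sqrt π := by
              apply mul_le_mul_of_nonneg_right hPs2n hP.le
      calc sn ^ 2 * (1 - t) ≤ (π * Real.exp t) * (1 - t) := by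
            apply mul_le_mul_of_nonneg_right h1 ht0
        _ = π * ((1 - t) * Real.exp t) := by ring
        _ ≤ π * 1 := by
            apply mul_le_mul_of_nonneg_left hexp hπ.le
        _ = π := mul_one π
        _ ≤ s2n * Real.sqrt π := h2
    rw [div_mul_eq_mul_div, one_mul, div_le_div_iff₀ (by positivity) (by positivity)]
    nlinarith [mul_le_mul_of_nonneg_right hkey2 hS.le, hS, hsnpos]
  · rw [hB]
    push_cast
    apply add_le_add_right
    rw [hsqd]
    rw [div_le_div_iff₀ (by positivity) (by positivity)]
    have hkey3 : s2n * Real.sqrt π ≤ sn ^ 2 := by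
      calc s2n * Real.sqrt π ≤ sn * sn := mul_le_mul hle1 hPsn hP.le hsnpos.le
        _ = sn ^ 2 := (sq sn).symm
    nlinarith [mul_le_mul_of_nonneg_right hkey3 hS.le, hS]
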